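/- Let N, η, a, b be given with a, b nonzero integers, N ≥ 1, η ∈ (0,1). The number of solutions to a(x₁² − x₂²) = b(y₁ − y₂) with x₁, x₂ integers in (ηN, N] and y₁, y₂ ∈ [N] is O_b(η^{−1} N²). -/

import Mathlib

/-- The number of solutions to `a(x₁² − x₂²) = b(y₁ − y₂)` with `x₁, x₂ ∈ (ηN, N]` and
`y₁, y₂ ∈ [N]` is `O_b(η⁻¹ N²)`. -/
theorem mixed_equation_count :
    ∀ b : ℤ, b ≠ 0 → ∃ C : ℝ, 0 < C ∧ ∀ a : ℤ, a ≠ 0 → ∀ (N : ℕ) (η : ℝ),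
      1 ≤ N → η ∈ Set.Ioo (0 : ℝ) 1 →
      ((((Finset.Ioc ⌊η * N⌋ (N : ℤ) ×ˢ Finset.Ioc ⌊η * N⌋ (N : ℤ)) ×ˢ
          (Finset.Icc 1 (N : ℤ) ×ˢ Finset.Icc 1 (N : ℤ))).filter
            (fun p => a * (p.1.1 ^ 2 - p.1.2 ^ 2) = b * (p.2.1 - p.2.2))).card : ℝ) ≤
        C * η⁻¹ * (N : ℝ) ^ 2 := by
  intro b hb
  refine ⟨4 * (b.natAbs : ℝ) + 2, by positivity, ?_⟩
  intro a ha N η hN hη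
  obtain ⟨hη0, hη1⟩ := hη
  have hNR : (1 : ℝ) ≤ (N : ℝ) := by exact_mod_cast hN
  set c : ℕ := ⌈η⁻¹⌉₊ with hc
  set K : ℤ := (b.natAbs : ℤ) * (c : ℤ) with hKdef
  have hK0 : 0 ≤ K := by positivity
  set M := Finset.Ioc ⌊η * N⌋ (N : ℤ) with hM
  set Y := Finset.Icc 1 (N : ℤ) with hY
  set S := ((M ×ˢ M) ×ˢ (Y ×ˢ Y)).filter
      (fun p => a * (p.1.1 ^ 2 - p.1.2 ^ 2) = b * (p.2.1 - p.2.2)) with hS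
  have hfl : (0 : ℤ) ≤ ⌊η * N⌋ := Int.floor_nonneg.mpr (by positivity)
  have hMcard : M.card ≤ N := by
    rw [hM, Int.card_Ioc]
    omega
  have hYcard : Y.card = N := by
    rw [hY, Int.card_Icc]
    omega
  -- membership unfolding helper
  have hmem : ∀ p ∈ S, (⌊η * N⌋ < p.1.1 ∧ p.1.1 ≤ (N : ℤ)) ∧ (⌊η * N⌋ < p.1.2 ∧ p.1.2 ≤ (N : ℤ))
      ∧ (1 ≤ p.2.1 ∧ p.2.1 ≤ (N : ℤ)) ∧ (1 ≤ p.2.2 ∧ p.2.2 ≤ (N : ℤ))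
      ∧ a * (p.1.1 ^ 2 - p.1.2 ^ 2) = b * (p.2.1 - p.2.2) := by
    intro p hp
    rw [hS] at hp
    simp only [Finset.mem_filter, Finset.mem_product, hM, hY, Finset.mem_Ioc,
      Finset.mem_Icc] at hp
    tauto
  -- diagonal bound
  have hdiag : (S.filter (fun p => p.1.1 = p.1.2)).card ≤ N * N := by
    have h1 : (S.filter (fun p => p.1.1 = p.1.2)).card ≤ (M ×ˢ Y).card := by
      apply Finset.card_le_card_of_injOn (fun p => (p.1.1, p.2.1))
      · intro p hp
        rw [Finset.mem_coe, Finset.mem_filter] at hp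
        have h := hmem p hp.1
        simp only [Finset.mem_coe, Finset.mem_product, hM, hY, Finset.mem_Ioc, Finset.mem_Icc]
        tauto
      · intro p hp q hq hpq
        rw [Finset.mem_coe, Finset.mem_filter] at hp hq
        have hpm := hmem p hp.1
        have hqm := hmem q hq.1
        have hpe := hpm.2.2.2.2
        have hqe := hqm.2.2.2.2
        have hpd : p.1.1 = p.1.2 := hp.2
        have hqd : q.1.1 = q.1.2 := hq.2
        -- y₁ = y₂ in both
        have hpy : p.2.1 = p.2.2 := by
          rw [hpd] at hpe
          have : b * (p.2.1 - p.2.2) = 0 := by linarith [hpe]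
          rcases mul_eq_zero.mp this with h | h
          · exact absurd h hb
          · omega
        have hqy : q.2.1 = q.2.2 := by
          rw [hqd] at hqe
          have : b * (q.2.1 - q.2.2) = 0 := by linarith [hqe]
          rcases mul_eq_zero.mp this with h | h
          · exact absurd h hb
          · omega
        simp only [Prod.mk.injEq] at hpq
        obtain ⟨h11, h21⟩ := hpq
        ext
        · exact h11
        · rw [← hpd, ← hqd, h11]
        · exact h21
        · rw [← hpy, ← hqy, h21]
    calc (S.filter (fun p => p.1.1 = p.1.2)).card ≤ (M ×ˢ Y).card := h1
      _ = M.card * Y.card := Finset.card_product _ _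
      _ ≤ N * N := by rw [hYcard]; exact Nat.mul_le_mul_right _ hMcard
  -- off-diagonal bound
  have hoff : (S.filter (fun p => ¬ p.1.1 = p.1.2)).card ≤ (2 * K + 1).toNat * (N * N) := by
    have h1 : (S.filter (fun p => ¬ p.1.1 = p.1.2)).card ≤
        (Finset.Icc (-K) K ×ˢ (Y ×ˢ Y)).card := by
      apply Finset.card_le_card_of_injOn (fun p => (p.1.1 - p.1.2, p.2))
      · intro p hp
        rw [Finset.mem_coe, Finset.mem_filter] at hp
        have h := hmem p hp.1
        obtain ⟨⟨hx1l, hx1u⟩, ⟨hx2l, hx2u⟩, ⟨hy1l, hy1u⟩, ⟨hy2l, hy2u⟩, heq⟩ := h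
        simp only [Finset.mem_coe, Finset.mem_product, hY, Finset.mem_Icc]
        refine ⟨?_, ⟨hy1l, hy1u⟩, hy2l, hy2u⟩
        -- bound |x₁ - x₂| ≤ K
        have habs : |p.1.1 - p.1.2| * (p.1.1 + p.1.2) ≤ (b.natAbs : ℤ) * N := by
          have h0 : 0 < p.1.1 + p.1.2 := by omega
          have h2 : |a * (p.1.1 ^ 2 - p.1.2 ^ 2)| = |b * (p.2.1 - p.2.2)| := by rw [heq]
          rw [abs_mul, abs_mul] at h2
          have h3 : |p.2.1 - p.2.2| ≤ (N : ℤ) := by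
            rw [abs_le]; omega
          have h4 : |b| * |p.2.1 - p.2.2| ≤ (b.natAbs : ℤ) * N := by
            rw [Int.abs_eq_natAbs]
            exact mul_le_mul_of_nonneg_left h3 (by positivity)
          have h5 : |p.1.1 ^ 2 - p.1.2 ^ 2| ≤ |a| * |p.1.1 ^ 2 - p.1.2 ^ 2| := by
            have : 1 ≤ |a| := Int.one_le_abs ha
            nlinarith [abs_nonneg (p.1.1 ^ 2 - p.1.2 ^ 2)]
          have h6 : |p.1.1 ^ 2 - p.1.2 ^ 2| = |p.1.1 - p.1.2| * (p.1.1 + p.1.2) := by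
            have : p.1.1 ^ 2 - p.1.2 ^ 2 = (p.1.1 - p.1.2) * (p.1.1 + p.1.2) := by ring
            rw [this, abs_mul, abs_of_pos h0]
          omega
        -- go to ℝ
        have hx1r : η * N < (p.1.1 : ℝ) := by
          have := Int.lt_floor_add_one (η * N)
          have h7 : (⌊η * N⌋ : ℝ) + 1 ≤ (p.1.1 : ℝ) := by exact_mod_cast hx1l
          linarith
        have hx2r : η * N < (p.1.2 : ℝ) := by
          have := Int.lt_floor_add_one (η * N)
          have h7 : (⌊η * N⌋ : ℝ) + 1 ≤ (p.1.2 : ℝ) := by exact_mod_cast hx2l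
          linarith
        set dR : ℝ := |(p.1.1 : ℝ) - (p.1.2 : ℝ)| with hdR
        have habsR : dR * ((p.1.1 : ℝ) + p.1.2) ≤ (b.natAbs : ℝ) * N := by
          have h : ((|p.1.1 - p.1.2| * (p.1.1 + p.1.2) : ℤ) : ℝ) ≤ (((b.natAbs : ℤ) * N : ℤ) : ℝ) :=
            Int.cast_le.mpr habs
          push_cast at h
          rw [hdR, Nat.cast_natAbs, Int.cast_abs]; exact h
        have hdnn : (0 : ℝ) ≤ dR := by rw [hdR]; positivity
        have hkey : dR * (2 * (η * N)) ≤ (b.natAbs : ℝ) * N :=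
          le_trans (mul_le_mul_of_nonneg_left (by linarith) hdnn) habsR
        have hcge : η⁻¹ ≤ (c : ℝ) := Nat.le_ceil _
        have hdK : dR ≤ (K : ℝ) := by
          have h2ηN : (0 : ℝ) < 2 * (η * N) := by positivity
          rw [← mul_le_mul_iff_of_pos_right h2ηN]
          calc dR * (2 * (η * N)) ≤ (b.natAbs : ℝ) * N := hkey
            _ ≤ (K : ℝ) * (2 * (η * N)) := by
                have hηc : 1 ≤ η * c := by
                  have := mul_le_mul_of_nonneg_left hcge (le_of_lt hη0)
                  rwa [mul_inv_cancel₀ (ne_of_gt hη0)] at this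
                have hKc : (K : ℝ) = (b.natAbs : ℝ) * c := by
                  rw [hKdef]; push_cast [Nat.cast_natAbs]; ring
                rw [hKc]
                have hbN : (0:ℝ) ≤ (b.natAbs : ℝ) * N := by positivity
                nlinarith [mul_le_mul_of_nonneg_left hηc hbN]
        have : |p.1.1 - p.1.2| ≤ K := by rw [hdR] at hdK; exact_mod_cast hdK
        exact abs_le.mp this
      · intro p hp q hq hpq
        rw [Finset.mem_coe, Finset.mem_filter] at hp hq
        have hpm := hmem p hp.1
        have hqm := hmem q hq.1
        have hpe := hpm.2.2.2.2
        have hqe := hqm.2.2.2.2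
        simp only [Prod.mk.injEq] at hpq
        obtain ⟨hd, hy⟩ := hpq
        have hdne : p.1.1 - p.1.2 ≠ 0 := fun h => hp.2 (by omega)
        have hfac : ∀ x y : ℤ, x ^ 2 - y ^ 2 = (x - y) * (x + y) := by intro x y; ring
        rw [hfac] at hpe hqe
        have hs : a * (p.1.1 - p.1.2) * (p.1.1 + p.1.2)
            = a * (q.1.1 - q.1.2) * (q.1.1 + q.1.2) := by
          have hby : b * (p.2.1 - p.2.2) = b * (q.2.1 - q.2.2) := by rw [hy]
          linear_combination hpe - hqe + hby
        have had : a * (p.1.1 - p.1.2) ≠ 0 := mul_ne_zero ha hdne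
        have hsum : p.1.1 + p.1.2 = q.1.1 + q.1.2 := by
          rw [hd] at hs
          exact mul_left_cancel₀ (by rw [← hd] at hs ⊢; exact had) hs
        have h11 : p.1.1 = q.1.1 := by omega
        have h12 : p.1.2 = q.1.2 := by omega
        ext
        · exact h11
        · exact h12
        · exact congrArg Prod.fst hy
        · exact congrArg Prod.snd hy
    calc (S.filter (fun p => ¬ p.1.1 = p.1.2)).card ≤ (Finset.Icc (-K) K ×ˢ (Y ×ˢ Y)).card := h1
      _ = (Finset.Icc (-K) K).card * (Y.card * Y.card) := by
          rw [Finset.card_product, Finset.card_product]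
      _ = (2 * K + 1).toNat * (N * N) := by rw [hYcard, Int.card_Icc]; congr 1; omega
  -- combine
  have hsplit : (S.filter (fun p => p.1.1 = p.1.2)).card
      + (S.filter (fun p => ¬ p.1.1 = p.1.2)).card = S.card :=
    Finset.card_filter_add_card_filter_not _
  have hcard : S.card ≤ N * N + (2 * K + 1).toNat * (N * N) := by omega
  have hcardR : (S.card : ℝ) ≤ (N : ℝ) ^ 2 + (2 * (K : ℝ) + 1) * (N : ℝ) ^ 2 := by
    have h1 : ((N * N + (2 * K + 1).toNat * (N * N) : ℕ) : ℝ)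
        = (N : ℝ) ^ 2 + (((2 * K + 1).toNat : ℤ) : ℝ) * (N : ℝ) ^ 2 := by push_cast; ring
    have h2 : (((2 * K + 1).toNat : ℤ) : ℝ) = 2 * (K : ℝ) + 1 := by
      have : ((2 * K + 1).toNat : ℤ) = 2 * K + 1 := Int.toNat_of_nonneg (by omega)
      exact_mod_cast congrArg (Int.cast : ℤ → ℝ) this
    calc (S.card : ℝ) ≤ ((N * N + (2 * K + 1).toNat * (N * N) : ℕ) : ℝ) := by exact_mod_cast hcard
      _ = (N : ℝ) ^ 2 + (2 * (K : ℝ) + 1) * (N : ℝ) ^ 2 := by rw [h1, h2]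
  -- final real inequality
  have hcge : η⁻¹ ≤ (c : ℝ) := Nat.le_ceil _
  have hclt : (c : ℝ) < η⁻¹ + 1 := Nat.ceil_lt_add_one (by positivity)
  have hinv1 : 1 < η⁻¹ := (one_lt_inv₀ hη0).mpr hη1
  have hKR : (K : ℝ) = (b.natAbs : ℝ) * c := by
    rw [hKdef]; push_cast [Nat.cast_natAbs]; ring
  have hbnn : (0 : ℝ) ≤ (b.natAbs : ℝ) := Nat.cast_nonneg _
  have hfinal : (2 * (K : ℝ) + 2) ≤ (4 * (b.natAbs : ℝ) + 2) * η⁻¹ := by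
    rw [hKR]
    nlinarith [mul_le_mul_of_nonneg_left (le_of_lt hclt) hbnn,
      mul_nonneg hbnn (by linarith : (0:ℝ) ≤ η⁻¹ - 1)]
  have hN2 : (0 : ℝ) ≤ (N : ℝ) ^ 2 := by positivity
  calc (S.card : ℝ) ≤ (N : ℝ) ^ 2 + (2 * (K : ℝ) + 1) * (N : ℝ) ^ 2 := hcardR
    _ = (2 * (K : ℝ) + 2) * (N : ℝ) ^ 2 := by ring
    _ ≤ ((4 * (b.natAbs : ℝ) + 2) * η⁻¹) * (N : ℝ) ^ 2 := by
        exact mul_le_mul_of_nonneg_right hfinal hN2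
    _ = (4 * (b.natAbs : ℝ) + 2) * η⁻¹ * (N : ℝ) ^ 2 := by ring
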